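/- Let F be a field, let M be a p×q matrix over F, and let E be a p×q matrix in row reduced echelon form that is row equivalent to M. Then for every column index j, the j-th column of E is a pivot column of E if and only if the j-th column of M does not lie in the linear span of the columns of M with index strictly less than j. (The pivot columns of the RREF of M correspond exactly to the Gauche basis columns of M.) -/

import Mathlib

open Matrix

/-- `E.IsPivot i j` : sweeping row `i` of `E` from the left, the first nonzero
entry is met at column `j` (i.e. `E i j ≠ 0` and all entries to its left vanish). -/
def Matrix.IsPivot {F : Type*} [Field F] {p q : ℕ}
    (E : Matrix (Fin p) (Fin q) F) (i : Fin p) (j : Fin q) : Prop :=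
  E i j ≠ 0 ∧ ∀ j' : Fin q, j' < j → E i j' = 0

/-- `E` is in row reduced echelon form:
(1) the first nonzero entry of every nonzero row is `1`;
(2) a pivot is the only nonzero entry of its column;
(3) a pivot in a lower row lies in a column strictly to the right;
(4) zero rows are at the bottom. -/
def Matrix.IsRREF {F : Type*} [Field F] {p q : ℕ}
    (E : Matrix (Fin p) (Fin q) F) : Prop :=
  (∀ i j, E.IsPivot i j → E i j = 1) ∧
  (∀ i j, E.IsPivot i j → ∀ i' : Fin p, i' ≠ i → E i' j = 0) ∧
  (∀ i₁ j₁ i₂ j₂, E.IsPivot i₁ j₁ → E.IsPivot i₂ j₂ → i₁ < i₂ → j₁ < j₂) ∧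
  (∀ i i' : Fin p, i ≤ i' → (∀ j, E i j = 0) → ∀ j, E i' j = 0)

/-- Two `p × q` matrices are row equivalent iff one is obtained from the
other by left multiplication by an invertible `p × p` matrix. -/
def Matrix.RowEquiv {F : Type*} [Field F] {p q : ℕ}
    (M N : Matrix (Fin p) (Fin q) F) : Prop :=
  ∃ P : Matrix (Fin p) (Fin p) F, IsUnit P ∧ N = P * M

/-- The pivot columns of the RREF of `M` correspond exactly to the Gauche
basis columns of `M`: column `j` of `E` is a pivot column iff column `j` of `M`
is not in the span of the columns of `M` strictly to its left. -/
lemma row_has_pivot {F : Type*} [Field F] {p q : ℕ}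
    (E : Matrix (Fin p) (Fin q) F) (i : Fin p) (h : ∃ j, E i j ≠ 0) :
    ∃ j, E.IsPivot i j := by
  classical
  let s : Finset (Fin q) := Finset.univ.filter (fun j => E i j ≠ 0)
  have hs : s.Nonempty := by obtain ⟨j, hj⟩ := h; exact ⟨j, by simp [s, hj]⟩
  refine ⟨s.min' hs, ?_, ?_⟩
  · have := s.min'_mem hs; simpa [s] using this
  · intro j' hj'
    by_contra hne
    have : s.min' hs ≤ j' := s.min'_le _ (by simp [s, hne])
    exact absurd hj' (not_lt.mpr this)

lemma rref_pivot_iff {F : Type*} [Field F] {p q : ℕ}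
    (E : Matrix (Fin p) (Fin q) F) (hE : E.IsRREF) (j : Fin q) :
    (∃ i : Fin p, E.IsPivot i j) ↔
      Eᵀ j ∉ Submodule.span F (Eᵀ '' {j' : Fin q | j' < j}) := by
  classical
  obtain ⟨h1, h2, _, _⟩ := hE
  constructor
  · rintro ⟨i, hi⟩ hmem
    have hle : Submodule.span F (Eᵀ '' {j' : Fin q | j' < j}) ≤
        LinearMap.ker (LinearMap.proj (R := F) (φ := fun _ : Fin p => F) i) := by
      rw [Submodule.span_le]
      rintro _ ⟨j', hj', rfl⟩
      simpa [LinearMap.mem_ker] using hi.2 j' hj'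
    have : Eᵀ j i = 0 := hle hmem
    exact hi.1 (by simpa using this)
  · intro hnp
    by_contra hmem
    apply hnp; clear hnp
    -- no pivot in column j; show Eᵀ j ∈ span of earlier columns
    have hnopiv : ∀ i : Fin p, ¬ E.IsPivot i j := by
      intro i hi; exact hmem ⟨i, hi⟩
    set pc : Fin p → Fin q := fun i =>
      if h : ∃ j', E.IsPivot i j' then h.choose else j with hpc
    have hpcpiv : ∀ i, (∃ j', E.IsPivot i j') → E.IsPivot i (pc i) := by
      intro i h; simp only [hpc, dif_pos h]; exact h.choose_spec
    have hrowzero : ∀ i, ¬(∃ j', E.IsPivot i j') → ∀ j', E i j' = 0 := by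
      intro i h j'
      by_contra hne
      exact h (row_has_pivot E i ⟨j', hne⟩)
    have hsum : Eᵀ j = ∑ i : Fin p, E i j • Eᵀ (pc i) := by
      funext i'
      simp only [Finset.sum_apply, Pi.smul_apply, smul_eq_mul, transpose_apply]
      rw [Finset.sum_eq_single i']
      · by_cases h : ∃ j', E.IsPivot i' j'
        · rw [h1 i' (pc i') (hpcpiv i' h), mul_one]
        · rw [hrowzero i' h j, zero_mul]
      · intro b _ hb
        by_cases h : ∃ j', E.IsPivot b j'
        · rw [h2 b (pc b) (hpcpiv b h) i' (Ne.symm hb), mul_zero]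
        · rw [hrowzero b h j, zero_mul]
      · intro h; exact absurd (Finset.mem_univ i') h
    rw [hsum]
    apply Submodule.sum_mem
    intro i _
    by_cases hz : E i j = 0
    · rw [hz, zero_smul]; exact Submodule.zero_mem _
    · have hpiv : ∃ j', E.IsPivot i j' := row_has_pivot E i ⟨j, hz⟩
      have hp := hpcpiv i hpiv
      have hlt : pc i < j := by
        rcases lt_trichotomy (pc i) j with h | h | h
        · exact h
        · exact absurd (h ▸ hp) (hnopiv i)
        · exact absurd (hp.2 j h) hz
      exact Submodule.smul_mem _ _ (Submodule.subset_span ⟨pc i, hlt, rfl⟩)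

theorem pivot_iff_gauche {F : Type*} [Field F] {p q : ℕ}
    (M E : Matrix (Fin p) (Fin q) F)
    (hE : E.IsRREF) (hME : M.RowEquiv E) (j : Fin q) :
    (∃ i : Fin p, E.IsPivot i j) ↔
      Mᵀ j ∉ Submodule.span F (Mᵀ '' {j' : Fin q | j' < j}) := by
  classical
  obtain ⟨P, hP, rfl⟩ := hME
  have hdet : IsUnit P.det := (Matrix.isUnit_iff_isUnit_det P).mp hP
  have hinv : P⁻¹ * P = 1 := Matrix.nonsing_inv_mul P hdet
  have hcol : ∀ j' : Fin q, (P * M)ᵀ j' = P *ᵥ (Mᵀ j') := by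
    intro j'; funext i
    simp [Matrix.mulVec, Matrix.mul_apply, Matrix.transpose_apply, dotProduct]
  have hinj : Function.Injective (P.mulVecLin) := by
    intro a b hab
    have : P⁻¹ *ᵥ (P *ᵥ a) = P⁻¹ *ᵥ (P *ᵥ b) := by
      simpa [Matrix.mulVecLin_apply] using congrArg (P⁻¹ *ᵥ ·) hab
    simpa [Matrix.mulVec_mulVec, hinv] using this
  have himg : (P * M)ᵀ '' {j' : Fin q | j' < j} =
      P.mulVecLin '' (Mᵀ '' {j' : Fin q | j' < j}) := by
    rw [Set.image_image (f := Mᵀ)]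
    exact Set.image_congr (fun j' _ => by simp [hcol, Matrix.mulVecLin_apply])
  rw [rref_pivot_iff _ hE, hcol, himg, ← Matrix.mulVecLin_apply,
    ← Submodule.map_span]
  constructor
  · intro h hmem
    exact h (Submodule.mem_map_of_mem hmem)
  · intro h hmem
    obtain ⟨y, hy, hxy⟩ := hmem
    exact h ((hinj hxy) ▸ hy)
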